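/- Let f : Γ → Γ' be a fold of graphs identifying closed edges e_1 and e_2 with common initial vertex. Then f is a homotopy equivalence if and only if the terminal vertices of e_1 and e_2 are distinct (i.e. the fold is of type 1). A type-2 fold (equal terminal vertices) fails to be injective on fundamental groups. -/

import Mathlib

/-- A (Serre) graph: a vertex set, a set of darts (oriented edges), a
fixed-point-free involution reversing darts, and an initial-vertex map. -/
structure SerreGraph where
  V : Type
  E : Type
  bar : E → E
  bar_bar : ∀ e, bar (bar e) = e
  bar_ne : ∀ e, bar e ≠ e
  src : E → V

/-- Terminal vertex of a dart. -/
def SerreGraph.tgt (G : SerreGraph) (e : G.E) : G.V := G.src (G.bar e)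

/-- Local finiteness of a graph. -/
def SerreGraph.LocFin (G : SerreGraph) : Prop := ∀ v : G.V, {e : G.E | G.src e = v}.Finite

/-- A combinatorial graph morphism (darts to darts). -/
structure GraphHom (G H : SerreGraph) where
  onV : G.V → H.V
  onE : G.E → H.E
  map_bar : ∀ e, onE (G.bar e) = H.bar (onE e)
  map_src : ∀ e, onV (G.src e) = H.src (onE e)

theorem GraphHom.map_tgt {G H : SerreGraph} (f : GraphHom G H) (e : G.E) :
    f.onV (G.tgt e) = H.tgt (f.onE e) := by
  unfold SerreGraph.tgt; rw [f.map_src, f.map_bar]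

/-- Composition of graph morphisms. -/
def GraphHom.comp {G H K : SerreGraph} (g : GraphHom H K) (f : GraphHom G H) :
    GraphHom G K where
  onV := g.onV ∘ f.onV
  onE := g.onE ∘ f.onE
  map_bar e := by simp [Function.comp, f.map_bar, g.map_bar]
  map_src e := by simp [Function.comp, f.map_src, g.map_src]

/-- Identity graph morphism. -/
def GraphHom.id (G : SerreGraph) : GraphHom G G :=
  ⟨fun v => v, fun e => e, fun _ => rfl, fun _ => rfl⟩

/-- Edge walks in a graph, with explicit endpoint bookkeeping. -/
inductive EWalk (G : SerreGraph) : G.V → G.V → Type where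
  | nil (v : G.V) : EWalk G v v
  | cons {u v w : G.V} (e : G.E) (hs : G.src e = u) (ht : G.tgt e = v)
      (p : EWalk G v w) : EWalk G u w

/-- A graph is connected if any two vertices are joined by an edge walk. -/
def SerreGraph.Conn (G : SerreGraph) : Prop := ∀ u v : G.V, Nonempty (EWalk G u v)

/-- Homotopy (rel endpoints) of edge walks: the equivalence relation generated
by cancelling backtracks `e · ē`. -/
inductive Htp (G : SerreGraph) : ∀ {u v : G.V}, EWalk G u v → EWalk G u v → Prop where
  | refl {u v} (p : EWalk G u v) : Htp G p p
  | symm {u v} {p q : EWalk G u v} : Htp G p q → Htp G q p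
  | trans {u v} {p q r : EWalk G u v} : Htp G p q → Htp G q r → Htp G p r
  | cons {u v w} (e : G.E) (hs : G.src e = u) (ht : G.tgt e = v)
      {p q : EWalk G v w} : Htp G p q →
      Htp G (EWalk.cons e hs ht p) (EWalk.cons e hs ht q)
  | cancel {u v w} (e : G.E) (hs : G.src e = u) (ht : G.tgt e = v)
      (hs' : G.src (G.bar e) = v) (ht' : G.tgt (G.bar e) = u)
      (p : EWalk G u w) :
      Htp G (EWalk.cons e hs ht (EWalk.cons (G.bar e) hs' ht' p)) p

/-- The image of an edge walk under a graph morphism. -/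
def GraphHom.mapWalk {G H : SerreGraph} (f : GraphHom G H) :
    ∀ {u v : G.V}, EWalk G u v → EWalk H (f.onV u) (f.onV v)
  | _, _, .nil v => .nil (f.onV v)
  | _, _, .cons e hs ht p =>
      .cons (f.onE e) (by rw [← f.map_src, hs]) (by rw [← f.map_tgt, ht])
        (f.mapWalk p)

/-- `f` induces a bijection on fundamental groups at `v₀` (surjectivity and
injectivity on homotopy classes of loops); for connected graphs this is
equivalent to `f` being a homotopy equivalence. -/
def InducesPi1Bij {G H : SerreGraph} (f : GraphHom G H) (v₀ : G.V) : Prop :=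
  (∀ q : EWalk H (f.onV v₀) (f.onV v₀),
      ∃ p : EWalk G v₀ v₀, Htp H (f.mapWalk p) q) ∧
  (∀ p p' : EWalk G v₀ v₀, Htp H (f.mapWalk p) (f.mapWalk p') → Htp G p p')

/-- Immersions: locally injective combinatorial graph maps. -/
def IsImmersion {G H : SerreGraph} (f : GraphHom G H) : Prop :=
  ∀ a b : G.E, G.src a = G.src b → f.onE a = f.onE b → a = b

/-- Isomorphisms of graphs. -/
def IsGraphIso {G H : SerreGraph} (f : GraphHom G H) : Prop :=
  Function.Bijective f.onV ∧ Function.Bijective f.onE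

/-- `f` is the Stallings fold identifying the (closures of the) distinct darts
`e₁, e₂` with common initial vertex: it is surjective, identifies exactly the
orbits of `{e₁, e₂}` on darts and `{tgt e₁, tgt e₂}` on vertices, and nothing
else. -/
def IsFoldAt {G H : SerreGraph} (f : GraphHom G H) (e₁ e₂ : G.E) : Prop :=
  e₁ ≠ e₂ ∧ e₂ ≠ G.bar e₁ ∧ G.src e₁ = G.src e₂ ∧
  Function.Surjective f.onV ∧ Function.Surjective f.onE ∧
  f.onE e₁ = f.onE e₂ ∧
  (∀ a b : G.E, f.onE a = f.onE b →
    a = b ∨ ({a, b} : Set G.E) = {e₁, e₂} ∨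
      ({a, b} : Set G.E) = {G.bar e₁, G.bar e₂}) ∧
  (∀ u v : G.V, f.onV u = f.onV v →
    u = v ∨ ({u, v} : Set G.V) = {G.tgt e₁, G.tgt e₂})

/-- A Stallings fold. -/
def IsFold {G H : SerreGraph} (f : GraphHom G H) : Prop := ∃ e₁ e₂, IsFoldAt f e₁ e₂

/-- A type-1 Stallings fold: the folded edges have distinct terminal vertices. -/
def IsFold1 {G H : SerreGraph} (f : GraphHom G H) : Prop :=
  ∃ e₁ e₂, IsFoldAt f e₁ e₂ ∧ G.tgt e₁ ≠ G.tgt e₂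

/-- The composite `fs (n-1) ∘ ⋯ ∘ fs 0` of a chain of graph morphisms. -/
def chainComp (Gs : ℕ → SerreGraph) (fs : ∀ i : ℕ, GraphHom (Gs i) (Gs (i + 1))) :
    ∀ n : ℕ, GraphHom (Gs 0) (Gs n)
  | 0 => GraphHom.id (Gs 0)
  | n + 1 => (fs n).comp (chainComp Gs fs n)


/-! ### Auxiliary walk API -/

section WalkAPI
variable {G H : SerreGraph}

namespace EWalk

def append : ∀ {u v w : G.V}, EWalk G u v → EWalk G v w → EWalk G u w
  | _, _, _, .nil _, q => q
  | _, _, _, .cons e hs ht p, q => .cons e hs ht (p.append q)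

/-- The nil walk along an equality of vertices. -/
def nil' {u v : G.V} (h : u = v) : EWalk G u v := h ▸ nil v

def reverse : ∀ {u v : G.V}, EWalk G u v → EWalk G v u
  | _, _, .nil v => .nil v
  | u, _, .cons e hs ht p =>
      p.reverse.append (.cons (G.bar e) ht
        (by unfold SerreGraph.tgt; rw [G.bar_bar, hs]) (.nil u))

@[simp] theorem append_nil : ∀ {u v : G.V} (p : EWalk G u v), p.append (.nil v) = p
  | _, _, .nil v => rfl
  | _, _, .cons e hs ht p => by rw [append, append_nil]

theorem append_assoc : ∀ {u v w z : G.V} (p : EWalk G u v) (q : EWalk G v w)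
    (r : EWalk G w z), (p.append q).append r = p.append (q.append r)
  | _, _, _, _, .nil _, _, _ => rfl
  | _, _, _, _, .cons e hs ht p, q, r => by rw [append, append, append, append_assoc]

@[simp] theorem nil'_rfl {u : G.V} : (nil' (rfl : u = u)) = nil u := rfl

theorem nil'_id {u : G.V} (h : u = u) : (nil' (G := G) h) = nil u := rfl

theorem nil'_id_append {u w : G.V} (h : u = u) (p : EWalk G u w) :
    (nil' h).append p = p := rfl

theorem nil'_append_nil'_assoc {u v w z : G.V} (h : u = v) (h' : v = w)
    (q : EWalk G w z) :
    (nil' (G := G) h).append ((nil' h').append q) = (nil' (h.trans h')).append q := by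
  subst h; subst h'; rfl

theorem nil'_append_nil' {u v w : G.V} (h : u = v) (h' : v = w) :
    (nil' (G := G) h).append (nil' h') = nil' (h.trans h') := by subst h; subst h'; rfl

theorem nil'_append {u v w : G.V} (h : u = v) (p : EWalk G v w) :
    (nil' h).append p = h ▸ p := by subst h; rfl

theorem nil'_cons {u v w z : G.V} (h : u = v) (e : G.E) (hs : G.src e = v)
    (ht : G.tgt e = w) (p : EWalk G w z) :
    (nil' h).append (.cons e hs ht p) = .cons e (hs.trans h.symm) ht p := by
  subst h; rfl

theorem cons_nil'_append {u v w z : G.V} (e : G.E) (hs : G.src e = u)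
    (ht : G.tgt e = v) (h : v = w) (p : EWalk G w z) :
    EWalk.cons e hs ht ((nil' h).append p) = .cons e hs (ht.trans h) p := by
  subst h; rfl

theorem cons_nil' {u v w : G.V} (e : G.E) (hs : G.src e = u)
    (ht : G.tgt e = v) (h : v = w) :
    EWalk.cons e hs ht (nil' h) = .cons e hs (ht.trans h) (.nil w) := by
  subst h; rfl

theorem reverse_nil' {u v : G.V} (h : u = v) :
    (nil' (G := G) h).reverse = nil' h.symm := by subst h; rfl

theorem cons_congr {u v w : G.V} {e e' : G.E} (h : e = e') (hs : G.src e = u)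
    (ht : G.tgt e = v) (hs' : G.src e' = u) (ht' : G.tgt e' = v) (p : EWalk G v w) :
    EWalk.cons e hs ht p = .cons e' hs' ht' p := by subst h; rfl

end EWalk

namespace Htp

theorem of_eq {u v : G.V} {p q : EWalk G u v} (h : p = q) : Htp G p q := h ▸ .refl p

theorem append_right {u v w : G.V} {p q : EWalk G u v} (h : Htp G p q)
    (r : EWalk G v w) : Htp G (p.append r) (q.append r) := by
  induction h with
  | refl p => exact .refl _
  | symm _ ih => exact .symm (ih r)
  | trans _ _ ih1 ih2 => exact .trans (ih1 r) (ih2 r)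
  | cons e hs ht _ ih => exact .cons e hs ht (ih r)
  | cancel e hs ht hs' ht' p => exact .cancel e hs ht hs' ht' (p.append r)

theorem append_left : ∀ {u v w : G.V} (p : EWalk G u v) {q r : EWalk G v w},
    Htp G q r → Htp G (p.append q) (p.append r)
  | _, _, _, .nil _, _, _, h => h
  | _, _, _, .cons e hs ht p, _, _, h => .cons e hs ht (append_left p h)

/-- Cast-friendly cancellation. -/
theorem cancel_c {u v w' z : G.V} (e e' : G.E) (he : e' = G.bar e)
    (hs : G.src e = u) (ht : G.tgt e = v) (hs' : G.src e' = v)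
    (ht' : G.tgt e' = w') (hu : u = w') (p : EWalk G w' z) :
    Htp G (.cons e hs ht (.cons e' hs' ht' p)) ((EWalk.nil' hu).append p) := by
  subst he; subst hu
  rw [EWalk.nil'_rfl]
  exact .cancel e hs ht hs' ht' p

theorem reverse_append_self : ∀ {u v : G.V} (p : EWalk G u v),
    Htp G (p.reverse.append p) (.nil v)
  | _, _, .nil v => .refl _
  | u, _, .cons e hs ht p => by
      refine .trans (of_eq ?_) (.trans (append_left p.reverse
        (cancel_c (G.bar e) e (G.bar_bar e).symm ht
          (by unfold SerreGraph.tgt; rw [G.bar_bar, hs]) hs ht rfl p))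
        (.trans (of_eq (by rw [EWalk.nil'_rfl]; rfl)) (reverse_append_self p)))
      rw [EWalk.reverse, EWalk.append_assoc]
      rfl

theorem self_append_reverse : ∀ {u v : G.V} (p : EWalk G u v),
    Htp G (p.append p.reverse) (.nil u)
  | _, _, .nil v => .refl _
  | u, _, .cons e hs ht p => by
      simp only [EWalk.reverse, EWalk.append]
      refine .trans (.cons e hs ht (of_eq (EWalk.append_assoc _ _ _).symm))
        (.trans (.cons e hs ht (append_right (self_append_reverse p) _))
          (.cancel e hs ht ht (by unfold SerreGraph.tgt; rw [G.bar_bar, hs]) (.nil u)))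

theorem cancel_left {a u v : G.V} (c : EWalk G a u) {p q : EWalk G u v}
    (h : Htp G (c.append p) (c.append q)) : Htp G p q := by
  have h2 : Htp G (c.reverse.append (c.append p)) (c.reverse.append (c.append q)) :=
    append_left _ h
  rw [← EWalk.append_assoc, ← EWalk.append_assoc] at h2
  exact .trans (.symm (append_right (reverse_append_self c) p))
      (.trans h2 (append_right (reverse_append_self c) q))

end Htp

namespace GraphHom

theorem map_append (f : GraphHom G H) : ∀ {u v w : G.V} (p : EWalk G u v)
    (q : EWalk G v w), f.mapWalk (p.append q) = (f.mapWalk p).append (f.mapWalk q)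
  | _, _, _, .nil _, q => rfl
  | _, _, _, .cons e hs ht p, q => by
      rw [EWalk.append, mapWalk, mapWalk, EWalk.append, map_append]

theorem mapWalk_nil (f : GraphHom G H) (v : G.V) :
    f.mapWalk (.nil v) = .nil (f.onV v) := rfl

theorem mapWalk_cons (f : GraphHom G H) {u v w : G.V} (e : G.E)
    (hs : G.src e = u) (ht : G.tgt e = v) (p : EWalk G v w) :
    f.mapWalk (EWalk.cons e hs ht p) =
      .cons (f.onE e) (by rw [← f.map_src, hs]) (by rw [← f.map_tgt, ht])
        (f.mapWalk p) := rfl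

theorem mapWalk_nil' (f : GraphHom G H) {u v : G.V} (h : u = v) :
    f.mapWalk (EWalk.nil' h) = EWalk.nil' (congrArg f.onV h) := by subst h; rfl

theorem map_reverse (f : GraphHom G H) : ∀ {u v : G.V} (p : EWalk G u v),
    f.mapWalk p.reverse = (f.mapWalk p).reverse
  | _, _, .nil _ => rfl
  | u, _, .cons e hs ht p => by
      rw [EWalk.reverse, map_append, map_reverse f p, mapWalk_cons]
      erw [mapWalk_cons]
      simp only [EWalk.reverse]
      congr 1
      exact EWalk.cons_congr (f.map_bar e) _ _ _ _ _

end GraphHom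

theorem Htp.reverse {u v : G.V} {p q : EWalk G u v} (h : Htp G p q) :
    Htp G p.reverse q.reverse := by
  induction h with
  | refl p => exact .refl _
  | symm _ ih => exact .symm ih
  | trans _ _ ih1 ih2 => exact .trans ih1 ih2
  | cons e hs ht _ ih => exact append_right ih _
  | cancel e hs ht hs' ht' p =>
      simp only [EWalk.reverse]
      rw [EWalk.append_assoc]
      refine Htp.trans (Htp.append_left p.reverse ?_) (of_eq (EWalk.append_nil _))
      simp only [EWalk.append]
      exact cancel_c _ _ ((congrArg G.bar (G.bar_bar e)).symm) _ _ _ _ rfl (.nil _)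

end WalkAPI


/-! ### A free-group invariant of homotopy classes -/

section Invariant
variable {G : SerreGraph}

/-- The setoid identifying a dart with its reversal. -/
def barSetoid (G : SerreGraph) : Setoid G.E :=
  ⟨fun a b => b = a ∨ b = G.bar a, by
    constructor
    · intro a; exact Or.inl rfl
    · intro a b h
      rcases h with h | h
      · exact Or.inl h.symm
      · right; rw [h, G.bar_bar]
    · intro a b c h1 h2
      rcases h1 with h1 | h1 <;> rcases h2 with h2 | h2
      · exact Or.inl (h2.trans h1)
      · exact Or.inr (h2.trans (congrArg G.bar h1))
      · exact Or.inr (h2.trans h1)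
      · exact Or.inl ((h2.trans (congrArg G.bar h1)).trans (G.bar_bar a))⟩

noncomputable def repE (G : SerreGraph) (e : G.E) : G.E :=
  (Quotient.mk (barSetoid G) e).out

theorem repE_spec (e : G.E) : repE G e = e ∨ repE G e = G.bar e := by
  have h := Quotient.mk_out (s := barSetoid G) e
  rcases h with h | h
  · exact Or.inl h.symm
  · exact Or.inr ((congrArg G.bar h).trans (G.bar_bar _)).symm

theorem repE_bar (e : G.E) : repE G (G.bar e) = repE G e := by
  unfold repE
  congr 1
  exact Quotient.sound (Or.inr (G.bar_bar e).symm)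

/-- value of a dart in the free group on darts. -/
noncomputable def valE (G : SerreGraph) (e : G.E) : FreeGroup G.E :=
  @ite _ (repE G e = e) (Classical.dec _) (FreeGroup.of e) (FreeGroup.of (G.bar e))⁻¹

theorem valE_bar (e : G.E) : valE G (G.bar e) = (valE G e)⁻¹ := by
  unfold valE
  rcases repE_spec e with h | h
  · rw [if_pos h, if_neg (show ¬ (repE G (G.bar e) = G.bar e) by
      rw [repE_bar, h]; exact fun hc => G.bar_ne e hc.symm), G.bar_bar]
  · rw [if_pos (show repE G (G.bar e) = G.bar e by rw [repE_bar, h]),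
      if_neg (show ¬ (repE G e = e) by rw [h]; exact G.bar_ne e), inv_inv]

theorem of_ne_inv_of {α : Type} (a b : α) : FreeGroup.of a ≠ (FreeGroup.of b)⁻¹ := by
  intro hc
  have h1 := congrArg (FreeGroup.lift (fun _ : α => Multiplicative.ofAdd (1 : ℤ))) hc
  rw [FreeGroup.lift_apply_of, map_inv, FreeGroup.lift_apply_of] at h1
  have h3 : (1 : ℤ) = -1 := by simpa using congrArg Multiplicative.toAdd h1
  omega

theorem valE_inj {a b : G.E} (h : valE G a = valE G b) : a = b := by
  unfold valE at h
  split_ifs at h with h1 h2 h2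
  · exact FreeGroup.of_injective h
  · exact absurd h (of_ne_inv_of _ _)
  · exact absurd h.symm (of_ne_inv_of _ _)
  · have h4 := FreeGroup.of_injective (inv_injective h)
    rw [← G.bar_bar a, h4, G.bar_bar]

/-- The invariant of a walk. -/
noncomputable def iw : ∀ {u v : G.V}, EWalk G u v → FreeGroup G.E
  | _, _, .nil _ => 1
  | _, _, .cons e _ _ p => valE G e * iw p

theorem iw_nil (v : G.V) : iw (G := G) (.nil v) = 1 := rfl

theorem iw_cons {u v w : G.V} (e : G.E) (hs : G.src e = u) (ht : G.tgt e = v)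
    (p : EWalk G v w) : iw (.cons e hs ht p) = valE G e * iw p := rfl

theorem iw_append : ∀ {u v w : G.V} (p : EWalk G u v) (q : EWalk G v w),
    iw (p.append q) = iw p * iw q
  | _, _, _, .nil _, q => by rw [EWalk.append, iw, one_mul]
  | _, _, _, .cons e hs ht p, q => by
      rw [EWalk.append, iw, iw, iw_append, mul_assoc]

theorem iw_htp {u v : G.V} {p q : EWalk G u v} (h : Htp G p q) : iw p = iw q := by
  induction h with
  | refl p => rfl
  | symm _ ih => exact ih.symm
  | trans _ _ ih1 ih2 => exact ih1.trans ih2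
  | cons e hs ht _ ih => rw [iw, iw, ih]
  | cancel e hs ht hs' ht' p => rw [iw, iw, valE_bar, mul_inv_cancel_left]

end Invariant


/-! ### Fold machinery -/

section FoldSec
variable {G H : SerreGraph} {f : GraphHom G H} {e₁ e₂ : G.E}

theorem pair_cases {α : Type} {a b c d : α} (h : ({a, b} : Set α) = {c, d}) :
    (a = c ∨ a = d) ∧ (b = c ∨ b = d) ∧ (c = a ∨ c = b) ∧ (d = a ∨ d = b) := by
  have ha : a ∈ ({c, d} : Set α) := by rw [← h]; simp
  have hb : b ∈ ({c, d} : Set α) := by rw [← h]; simp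
  have hc : c ∈ ({a, b} : Set α) := by rw [h]; simp
  have hd : d ∈ ({a, b} : Set α) := by rw [h]; simp
  simp only [Set.mem_insert_iff, Set.mem_singleton_iff] at ha hb hc hd
  exact ⟨ha, hb, hc, hd⟩

namespace Fold

theorem e_ne (hf : IsFoldAt f e₁ e₂) : e₁ ≠ e₂ := hf.1
theorem e2_ne_bar (hf : IsFoldAt f e₁ e₂) : e₂ ≠ G.bar e₁ := hf.2.1
theorem src_eq (hf : IsFoldAt f e₁ e₂) : G.src e₁ = G.src e₂ := hf.2.2.1
theorem surjV (hf : IsFoldAt f e₁ e₂) : Function.Surjective f.onV := hf.2.2.2.1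
theorem surjE (hf : IsFoldAt f e₁ e₂) : Function.Surjective f.onE := hf.2.2.2.2.1
theorem fe_eq (hf : IsFoldAt f e₁ e₂) : f.onE e₁ = f.onE e₂ := hf.2.2.2.2.2.1
theorem edge_cond (hf : IsFoldAt f e₁ e₂) : ∀ a b : G.E, f.onE a = f.onE b →
    a = b ∨ ({a, b} : Set G.E) = {e₁, e₂} ∨
      ({a, b} : Set G.E) = {G.bar e₁, G.bar e₂} := hf.2.2.2.2.2.2.1
theorem vert_cond (hf : IsFoldAt f e₁ e₂) : ∀ u v : G.V, f.onV u = f.onV v →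
    u = v ∨ ({u, v} : Set G.V) = {G.tgt e₁, G.tgt e₂} := hf.2.2.2.2.2.2.2

theorem e1_ne_bar2 (hf : IsFoldAt f e₁ e₂) : e₁ ≠ G.bar e₂ :=
  fun h => e2_ne_bar hf ((congrArg G.bar h).trans (G.bar_bar _)).symm

theorem bar1_ne_bar2 (hf : IsFoldAt f e₁ e₂) : G.bar e₁ ≠ G.bar e₂ :=
  fun h => e_ne hf (by rw [← G.bar_bar e₁, h, G.bar_bar])

theorem fv_t (hf : IsFoldAt f e₁ e₂) : f.onV (G.tgt e₁) = f.onV (G.tgt e₂) := by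
  rw [f.map_tgt, f.map_tgt, fe_eq hf]

/-- Section of `f.onV` preferring `tgt e₁`. -/
noncomputable def sigV (hf : IsFoldAt f e₁ e₂) (x : H.V) : G.V :=
  @ite _ ((surjV hf x).choose = G.tgt e₂) (Classical.dec _)
    (G.tgt e₁) (surjV hf x).choose

theorem f_sigV (hf : IsFoldAt f e₁ e₂) (x : H.V) : f.onV (sigV hf x) = x := by
  unfold sigV
  split_ifs with h
  · rw [fv_t hf, ← h]; exact (surjV hf x).choose_spec
  · exact (surjV hf x).choose_spec

theorem sigV_f_t2 (hf : IsFoldAt f e₁ e₂) : sigV hf (f.onV (G.tgt e₂)) = G.tgt e₁ := by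
  unfold sigV
  split_ifs with h
  · rfl
  · have hs := (surjV hf (f.onV (G.tgt e₂))).choose_spec
    rcases vert_cond hf _ _ hs with h1 | h1
    · exact absurd h1 h
    · rcases (pair_cases h1).1 with h2 | h2
      · exact h2
      · exact absurd h2 h

theorem sigV_f (hf : IsFoldAt f e₁ e₂) (w : G.V) (hw : w ≠ G.tgt e₂) : sigV hf (f.onV w) = w := by
  unfold sigV
  have hs := (surjV hf (f.onV w)).choose_spec
  split_ifs with h
  · rw [h] at hs
    rcases vert_cond hf _ _ hs with h1 | h1
    · exact absurd h1.symm hw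
    · rcases (pair_cases h1).2.1 with h2 | h2
      · exact h2.symm
      · exact absurd h2 hw
  · rcases vert_cond hf _ _ hs with h1 | h1
    · exact h1
    · rcases (pair_cases h1).1 with h2 | h2
      · rcases (pair_cases h1).2.1 with h3 | h3
        · rw [h2, ← h3]
        · exact absurd h3 hw
      · exact absurd h2 h

/-- Section of `f.onE` avoiding `e₂` and `bar e₂`. -/
noncomputable def sigE (hf : IsFoldAt f e₁ e₂) (x : H.E) : G.E :=
  @ite _ ((surjE hf x).choose = e₂) (Classical.dec _) e₁
    (@ite _ ((surjE hf x).choose = G.bar e₂) (Classical.dec _)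
      (G.bar e₁) (surjE hf x).choose)

theorem f_sigE (hf : IsFoldAt f e₁ e₂) (x : H.E) : f.onE (sigE hf x) = x := by
  unfold sigE
  have hs := (surjE hf x).choose_spec
  split_ifs with h h2
  · rw [fe_eq hf, ← h]; exact hs
  · rw [f.map_bar, fe_eq hf, ← f.map_bar, ← h2]; exact hs
  · exact hs

theorem sigE_ne2 (hf : IsFoldAt f e₁ e₂) (x : H.E) : sigE hf x ≠ e₂ := by
  unfold sigE
  split_ifs with h h2
  · exact e_ne hf
  · exact fun hc => e2_ne_bar hf hc.symm
  · exact h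

theorem sigE_nb2 (hf : IsFoldAt f e₁ e₂) (x : H.E) : sigE hf x ≠ G.bar e₂ := by
  unfold sigE
  split_ifs with h h2
  · exact e1_ne_bar2 hf
  · exact bar1_ne_bar2 hf
  · exact h2

theorem sigE_f (hf : IsFoldAt f e₁ e₂) (a : G.E) (h2 : a ≠ e₂) (hb2 : a ≠ G.bar e₂) :
    sigE hf (f.onE a) = a := by
  rcases edge_cond hf _ _ (f_sigE hf (f.onE a)) with h1 | h1 | h1
  · exact h1
  · rcases (pair_cases h1).2.2.2 with h3 | h3
    · exact absurd h3.symm (sigE_ne2 hf _)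
    · exact absurd h3.symm h2
  · rcases (pair_cases h1).2.2.2 with h3 | h3
    · exact absurd h3.symm (sigE_nb2 hf _)
    · exact absurd h3.symm hb2

theorem sigE_bar (hf : IsFoldAt f e₁ e₂) (x : H.E) : sigE hf (H.bar x) = G.bar (sigE hf x) := by
  have hne : G.bar (sigE hf x) ≠ e₂ := fun hc =>
    sigE_nb2 hf x (((G.bar_bar _).symm.trans (congrArg G.bar hc)))
  have hnb : G.bar (sigE hf x) ≠ G.bar e₂ := fun hc =>
    sigE_ne2 hf x (by rw [← G.bar_bar (sigE hf x), hc, G.bar_bar])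
  have h1 := sigE_f hf (G.bar (sigE hf x)) hne hnb
  rw [f.map_bar, f_sigE] at h1
  exact h1

theorem sigE_f_cases (hf : IsFoldAt f e₁ e₂) (e : G.E) :
    sigE hf (f.onE e) = e ∨ (e = e₂ ∧ sigE hf (f.onE e) = e₁) ∨
      (e = G.bar e₂ ∧ sigE hf (f.onE e) = G.bar e₁) := by
  rcases edge_cond hf _ _ (f_sigE hf (f.onE e)) with h | h | h
  · exact Or.inl h
  · obtain ⟨hA, hB, _, _⟩ := pair_cases h
    rcases hA with h1 | h1
    · rcases hB with h2 | h2
      · exact Or.inl (h1.trans h2.symm)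
      · exact Or.inr (Or.inl ⟨h2, h1⟩)
    · exact absurd h1 (sigE_ne2 hf _)
  · obtain ⟨hA, hB, _, _⟩ := pair_cases h
    rcases hA with h1 | h1
    · rcases hB with h2 | h2
      · exact Or.inl (h1.trans h2.symm)
      · exact Or.inr (Or.inr ⟨h2, h1⟩)
    · exact absurd h1 (sigE_nb2 hf _)

/-- Connector walk from `sigV (f w)` to `w`: nontrivial only at `tgt e₂`. -/
noncomputable def conn (hf : IsFoldAt f e₁ e₂) (w : G.V) : EWalk G (sigV hf (f.onV w)) w :=
  @dite _ (w = G.tgt e₂) (Classical.dec _)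
    (fun h => EWalk.cons (G.bar e₁)
        (show G.src (G.bar e₁) = sigV hf (f.onV w) by
          rw [h, sigV_f_t2 hf]; rfl)
        (show G.tgt (G.bar e₁) = G.src e₂ by
          show G.src (G.bar (G.bar e₁)) = G.src e₂
          rw [G.bar_bar]; exact src_eq hf)
        (EWalk.cons e₂ rfl h.symm (.nil w)))
    (fun h => EWalk.nil' (sigV_f hf w h))

theorem conn_ne (hf : IsFoldAt f e₁ e₂) (w : G.V) (hw : w ≠ G.tgt e₂) :
    conn hf w = EWalk.nil' (sigV_f hf w hw) := by
  unfold conn; rw [dif_neg hw]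

theorem conn_t2 (hf : IsFoldAt f e₁ e₂) (p1 : G.src (G.bar e₁) = sigV hf (f.onV (G.tgt e₂)))
    (p2 : G.tgt (G.bar e₁) = G.src e₂) (p3 : G.src e₂ = G.src e₂)
    (p4 : G.tgt e₂ = G.tgt e₂) :
    conn hf (G.tgt e₂) =
      EWalk.cons (G.bar e₁) p1 p2 (EWalk.cons e₂ p3 p4 (.nil _)) := by
  unfold conn; rw [dif_pos rfl]

theorem f_conn (hf : IsFoldAt f e₁ e₂) (w : G.V) :
    Htp H (f.mapWalk (conn hf w)) (EWalk.nil' (f_sigV hf (f.onV w))) := by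
  by_cases hw : w = G.tgt e₂
  · subst hw
    rw [conn_t2 hf _ _ rfl rfl, GraphHom.mapWalk_cons, GraphHom.mapWalk_cons,
      GraphHom.mapWalk_nil]
    refine Htp.trans (Htp.cancel_c (f.onE (G.bar e₁)) (f.onE e₂)
      (by rw [f.map_bar, H.bar_bar, fe_eq hf]) _ _ _ _
      (f_sigV hf _) (.nil _)) ?_
    · exact Htp.of_eq (by rw [EWalk.append_nil])
    · exact (sigV_f_t2 hf).symm
    · show G.src (G.bar (G.bar e₁)) = G.src e₂
      rw [G.bar_bar]; exact src_eq hf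
  · rw [conn_ne hf w hw, f.mapWalk_nil']
    exact Htp.of_eq rfl

theorem glue_rev_conn (hf : IsFoldAt f e₁ e₂) {w₁ w₂ : G.V} (hw : w₁ = w₂)
    (h₂ : sigV hf (f.onV w₁) = sigV hf (f.onV w₂)) {z : G.V}
    (r : EWalk G w₂ z) :
    Htp G ((conn hf w₁).reverse.append
      ((EWalk.nil' h₂).append ((conn hf w₂).append r)))
      ((EWalk.nil' hw).append r) := by
  subst hw
  show Htp G ((conn hf w₁).reverse.append ((conn hf w₁).append r)) r
  rw [← EWalk.append_assoc]
  exact Htp.append_right (Htp.reverse_append_self _) r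

theorem glue_rev_conn' (hf : IsFoldAt f e₁ e₂) {w₁ w₂ : G.V} (hw : w₁ = w₂)
    (h₂ : sigV hf (f.onV w₁) = sigV hf (f.onV w₂)) :
    Htp G ((conn hf w₁).reverse.append ((EWalk.nil' h₂).append (conn hf w₂)))
      (EWalk.nil' hw) := by
  subst hw
  exact Htp.reverse_append_self _

theorem glue_conn_rev (hf : IsFoldAt f e₁ e₂) {w₁ w₂ : G.V} (hw : w₁ = w₂)
    (hk : sigV hf (f.onV w₁) = sigV hf (f.onV w₂)) :
    Htp G ((conn hf w₁).append ((EWalk.nil' hw).append (conn hf w₂).reverse))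
      (EWalk.nil' hk) := by
  subst hw
  exact Htp.self_append_reverse _


theorem tgt_bar1 (hf : IsFoldAt f e₁ e₂) : G.tgt (G.bar e₁) = G.src e₂ := by
  show G.src (G.bar (G.bar e₁)) = G.src e₂
  rw [G.bar_bar]; exact src_eq hf

theorem glue_conn_rev' (hf : IsFoldAt f e₁ e₂) {w₁ w₂ : G.V} (hw : w₁ = w₂)
    (hk : sigV hf (f.onV w₁) = sigV hf (f.onV w₂)) {z : G.V}
    (r : EWalk G (sigV hf (f.onV w₂)) z) :
    Htp G ((conn hf w₁).append ((EWalk.nil' hw).append ((conn hf w₂).reverse.append r)))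
      ((EWalk.nil' hk).append r) := by
  subst hw
  show Htp G ((conn hf w₁).append ((conn hf w₁).reverse.append r)) r
  rw [← EWalk.append_assoc]
  exact Htp.append_right (Htp.self_append_reverse _) r

/-- One-edge lift. -/
noncomputable def lift1 (hf : IsFoldAt f e₁ e₂) (h : H.E) {x y : H.V}
    (hs : H.src h = x) (ht : H.tgt h = y) : EWalk G (sigV hf x) (sigV hf y) :=
  (EWalk.nil' (congrArg (sigV hf) (show x = f.onV (G.src (sigE hf h)) by
      rw [f.map_src, f_sigE, hs]))).append
    ((conn hf (G.src (sigE hf h))).append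
      (.cons (sigE hf h) rfl rfl
        ((conn hf (G.tgt (sigE hf h))).reverse.append
          (EWalk.nil' (congrArg (sigV hf) (show f.onV (G.tgt (sigE hf h)) = y by
            rw [f.map_tgt, f_sigE, ht]))))))

/-- Lift of a walk. -/
noncomputable def liftW (hf : IsFoldAt f e₁ e₂) :
    ∀ {x y : H.V}, EWalk H x y → EWalk G (sigV hf x) (sigV hf y)
  | _, _, .nil _ => .nil _
  | _, _, .cons h hs ht q => (lift1 hf h hs ht).append (liftW hf q)

theorem liftW_nil (hf : IsFoldAt f e₁ e₂) (v : H.V) :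
    liftW hf (.nil v) = .nil _ := rfl

theorem liftW_cons (hf : IsFoldAt f e₁ e₂) {x v y : H.V} (h : H.E)
    (hs : H.src h = x) (ht : H.tgt h = v) (q : EWalk H v y) :
    liftW hf (.cons h hs ht q) = (lift1 hf h hs ht).append (liftW hf q) := rfl

theorem edge_htp1 (hf : IsFoldAt f e₁ e₂) (e : G.E)
    {u v : G.V} (hs : G.src e = u) (ht : G.tgt e = v)
    (h₁ : sigV hf (f.onV u) = sigV hf (f.onV (G.src e)))
    (h₂ : sigV hf (f.onV (G.tgt e)) = sigV hf (f.onV v)) :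
    Htp G (((EWalk.nil' h₁).append ((conn hf (G.src e)).append
        (.cons e rfl rfl ((conn hf (G.tgt e)).reverse.append (EWalk.nil' h₂))))).append
        (conn hf v))
      ((conn hf u).append (.cons e hs ht (.nil v))) := by
  subst hs; subst ht
  rw [EWalk.nil'_id_append, EWalk.nil'_id, EWalk.append_nil, EWalk.append_assoc]
  simp only [EWalk.append]
  refine Htp.append_left _ ?_
  exact Htp.cons e rfl rfl (Htp.reverse_append_self _)

theorem edge_htp2 (hf : IsFoldAt f e₁ e₂) (ht12 : G.tgt e₁ ≠ G.tgt e₂)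
    {u v : G.V} (hs : G.src e₂ = u) (ht : G.tgt e₂ = v)
    (h₁ : sigV hf (f.onV u) = sigV hf (f.onV (G.src e₁)))
    (h₂ : sigV hf (f.onV (G.tgt e₁)) = sigV hf (f.onV v)) :
    Htp G (((EWalk.nil' h₁).append ((conn hf (G.src e₁)).append
        (.cons e₁ rfl rfl ((conn hf (G.tgt e₁)).reverse.append (EWalk.nil' h₂))))).append
        (conn hf v))
      ((conn hf u).append (.cons e₂ hs ht (.nil v))) := by
  subst ht
  have hsu : G.src e₁ = u := (src_eq hf).trans hs
  subst hsu
  rw [EWalk.nil'_id_append, conn_ne hf _ ht12, EWalk.reverse_nil',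
    EWalk.nil'_append_nil', EWalk.cons_nil', EWalk.append_assoc]
  simp only [EWalk.append]
  rw [conn_t2 hf (sigV_f_t2 hf).symm (tgt_bar1 hf) rfl rfl]
  refine Htp.append_left _ ?_
  refine Htp.trans (Htp.cancel_c e₁ (G.bar e₁) rfl _ _ _ _ (src_eq hf) _) ?_
  exact Htp.of_eq (by rw [EWalk.nil'_cons])

theorem edge_htp3 (hf : IsFoldAt f e₁ e₂) (ht12 : G.tgt e₁ ≠ G.tgt e₂)
    {u v : G.V} (hs : G.src (G.bar e₂) = u) (ht : G.tgt (G.bar e₂) = v)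
    (h₁ : sigV hf (f.onV u) = sigV hf (f.onV (G.src (G.bar e₁))))
    (h₂ : sigV hf (f.onV (G.tgt (G.bar e₁))) = sigV hf (f.onV v)) :
    Htp G (((EWalk.nil' h₁).append ((conn hf (G.src (G.bar e₁))).append
        (.cons (G.bar e₁) rfl rfl
          ((conn hf (G.tgt (G.bar e₁))).reverse.append (EWalk.nil' h₂))))).append
        (conn hf v))
      ((conn hf u).append (.cons (G.bar e₂) hs ht (.nil v))) := by
  have hs2 : G.tgt e₂ = u := hs
  subst hs2
  have ht2 : G.src e₂ = v := by
    rw [← ht]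
    show G.src e₂ = G.src (G.bar (G.bar e₂))
    rw [G.bar_bar]
  subst ht2
  rw [conn_ne hf (G.src (G.bar e₁)) (show G.src (G.bar e₁) ≠ G.tgt e₂ from ht12),
    EWalk.nil'_cons, EWalk.nil'_cons]
  simp only [EWalk.append]
  rw [EWalk.append_assoc]
  refine Htp.trans (Htp.cons _ _ _ (glue_rev_conn' hf (tgt_bar1 hf) h₂)) ?_
  rw [EWalk.cons_nil']
  rw [conn_t2 hf (sigV_f_t2 hf).symm (tgt_bar1 hf) rfl rfl]
  simp only [EWalk.append]
  refine Htp.symm (Htp.trans (Htp.cons (G.bar e₁) _ _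
    (Htp.cancel_c e₂ (G.bar e₂) rfl _ _ _ _ rfl (.nil _))) ?_)
  exact Htp.of_eq (by rw [EWalk.nil'_id_append])

theorem edge_htp (hf : IsFoldAt f e₁ e₂) (ht12 : G.tgt e₁ ≠ G.tgt e₂) (a e : G.E)
    (hcase : a = e ∨ (e = e₂ ∧ a = e₁) ∨ (e = G.bar e₂ ∧ a = G.bar e₁))
    {u v : G.V} (hs : G.src e = u) (ht : G.tgt e = v)
    (h₁ : sigV hf (f.onV u) = sigV hf (f.onV (G.src a)))
    (h₂ : sigV hf (f.onV (G.tgt a)) = sigV hf (f.onV v)) :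
    Htp G (((EWalk.nil' h₁).append ((conn hf (G.src a)).append
        (.cons a rfl rfl ((conn hf (G.tgt a)).reverse.append (EWalk.nil' h₂))))).append
        (conn hf v))
      ((conn hf u).append (.cons e hs ht (.nil v))) := by
  rcases hcase with h | ⟨h1, h2⟩ | ⟨h1, h2⟩
  · subst h; exact edge_htp1 hf a hs ht h₁ h₂
  · subst h1; subst h2; exact edge_htp2 hf ht12 hs ht h₁ h₂
  · subst h1; subst h2; exact edge_htp3 hf ht12 hs ht h₁ h₂

theorem lift1_conn (hf : IsFoldAt f e₁ e₂) (ht12 : G.tgt e₁ ≠ G.tgt e₂)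
    (e : G.E) {u v : G.V} (hs : G.src e = u) (ht : G.tgt e = v)
    (hsx : H.src (f.onE e) = f.onV u) (hty : H.tgt (f.onE e) = f.onV v) :
    Htp G ((lift1 hf (f.onE e) hsx hty).append (conn hf v))
      ((conn hf u).append (.cons e hs ht (.nil v))) := by
  unfold lift1
  exact edge_htp hf ht12 (sigE hf (f.onE e)) e (sigE_f_cases hf e) hs ht _ _

theorem lift_map (hf : IsFoldAt f e₁ e₂) (ht12 : G.tgt e₁ ≠ G.tgt e₂) :
    ∀ {u v : G.V} (p : EWalk G u v),
      Htp G ((liftW hf (f.mapWalk p)).append (conn hf v)) ((conn hf u).append p)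
  | _, _, .nil v => by
      rw [GraphHom.mapWalk_nil, liftW_nil]
      exact Htp.of_eq (EWalk.append_nil _).symm
  | _, _, .cons e hs ht p => by
      rw [GraphHom.mapWalk_cons, liftW_cons, EWalk.append_assoc]
      refine Htp.trans (Htp.append_left _ (lift_map hf ht12 p)) ?_
      rw [← EWalk.append_assoc]
      refine Htp.trans (Htp.append_right (lift1_conn hf ht12 e hs ht _ _) p) ?_
      refine Htp.of_eq ?_
      rw [EWalk.append_assoc]
      simp only [EWalk.append]

theorem pair_htp (hf : IsFoldAt f e₁ e₂) (a b : G.E) (hab : b = G.bar a)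
    {x y : H.V} {z : G.V}
    (h₁ : sigV hf x = sigV hf (f.onV (G.src a)))
    (h₂ : sigV hf (f.onV (G.tgt a)) = sigV hf y)
    (h₃ : sigV hf y = sigV hf (f.onV (G.src b)))
    (h₄ : sigV hf (f.onV (G.tgt b)) = sigV hf x)
    (r : EWalk G (sigV hf x) z) :
    Htp G (((EWalk.nil' h₁).append ((conn hf (G.src a)).append
        (.cons a rfl rfl ((conn hf (G.tgt a)).reverse.append (EWalk.nil' h₂))))).append
      ((((EWalk.nil' h₃).append ((conn hf (G.src b)).append
        (.cons b rfl rfl ((conn hf (G.tgt b)).reverse.append (EWalk.nil' h₄)))))).append r))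
      r := by
  subst hab
  have hu' : G.src a = G.tgt (G.bar a) := by
    show G.src a = G.src (G.bar (G.bar a)); rw [G.bar_bar]
  simp only [EWalk.append_assoc, EWalk.append]
  rw [EWalk.nil'_append_nil'_assoc]
  refine Htp.trans (Htp.append_left _ (Htp.append_left _ (Htp.cons a rfl rfl
    (glue_rev_conn hf rfl _ _)))) ?_
  erw [EWalk.nil'_cons]
  refine Htp.trans (Htp.append_left _ (Htp.append_left _
    (Htp.cancel_c a (G.bar a) rfl _ _ _ _ hu' _))) ?_
  refine Htp.trans (Htp.append_left _ (glue_conn_rev' hf hu'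
    (congrArg (fun w => sigV hf (f.onV w)) hu') _)) ?_
  rw [EWalk.nil'_append_nil'_assoc, EWalk.nil'_append_nil'_assoc]
  exact Htp.of_eq (EWalk.nil'_id_append _ _)

theorem lift1_pair (hf : IsFoldAt f e₁ e₂) (h : H.E) {x y : H.V}
    (hs : H.src h = x) (ht : H.tgt h = y)
    (hs' : H.src (H.bar h) = y) (ht' : H.tgt (H.bar h) = x) {z : G.V}
    (r : EWalk G (sigV hf x) z) :
    Htp G ((lift1 hf h hs ht).append ((lift1 hf (H.bar h) hs' ht').append r)) r := by
  unfold lift1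
  exact pair_htp hf (sigE hf h) (sigE hf (H.bar h)) (sigE_bar hf h) _ _ _ _ r

theorem lift_htp (hf : IsFoldAt f e₁ e₂) {x y : H.V} {q q' : EWalk H x y}
    (hq : Htp H q q') : Htp G (liftW hf q) (liftW hf q') := by
  induction hq with
  | refl p => exact .refl _
  | symm _ ih => exact .symm ih
  | trans _ _ ih1 ih2 => exact .trans ih1 ih2
  | cons h hs ht _ ih => exact Htp.append_left _ ih
  | cancel h hs ht hs' ht' q =>
      rw [liftW_cons, liftW_cons]
      exact lift1_pair hf h hs ht hs' ht' (liftW hf q)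

theorem f_lift1 (hf : IsFoldAt f e₁ e₂) (h : H.E) {x y : H.V}
    (hs : H.src h = x) (ht : H.tgt h = y) :
    Htp H (f.mapWalk (lift1 hf h hs ht))
      ((EWalk.nil' (f_sigV hf x)).append (.cons h hs
        (ht.trans (f_sigV hf y).symm) (.nil _))) := by
  unfold lift1
  rw [f.map_append, f.map_append, f.mapWalk_nil', GraphHom.mapWalk_cons,
    f.map_append, f.map_reverse, f.mapWalk_nil']
  refine Htp.trans (Htp.append_left _ (Htp.append_right (f_conn hf _) _)) ?_
  refine Htp.trans (Htp.append_left _ (Htp.append_left _ (Htp.cons _ _ _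
    (Htp.append_right (Htp.reverse (f_conn hf _)) _)))) ?_
  rw [EWalk.reverse_nil', EWalk.nil'_append_nil', EWalk.cons_nil',
    EWalk.nil'_append_nil'_assoc, EWalk.nil'_cons, EWalk.nil'_cons]
  exact Htp.of_eq (EWalk.cons_congr (f_sigE hf h) _ _ _ _ _)

theorem f_lift (hf : IsFoldAt f e₁ e₂) : ∀ {x y : H.V} (q : EWalk H x y),
    Htp H (f.mapWalk (liftW hf q))
      ((EWalk.nil' (f_sigV hf x)).append (q.append (EWalk.nil' (f_sigV hf y).symm)))
  | _, _, .nil v => by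
      rw [liftW_nil, GraphHom.mapWalk_nil]
      simp only [EWalk.append]
      rw [EWalk.nil'_append_nil']
      exact Htp.of_eq rfl
  | _, _, .cons h hs ht q => by
      rw [liftW_cons, f.map_append]
      refine Htp.trans (Htp.append_right (f_lift1 hf h hs ht) _) ?_
      refine Htp.trans (Htp.append_left _ (f_lift hf q)) ?_
      simp only [EWalk.append_assoc, EWalk.append]
      rw [EWalk.cons_nil'_append]
      exact Htp.of_eq rfl
end Fold

end FoldSec

/-!
STATEMENT 14: Let `f : Γ → Γ'` be a fold of graphs identifying the closed edges
`e₁` and `e₂` with common initial vertex (`IsFoldAt f e₁ e₂`), `Γ` connected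
with basepoint `v₀`.  Then `f` is a homotopy equivalence (it induces a bijection
on homotopy classes of loops at the basepoint, which for connected graphs is
equivalent to being a homotopy equivalence) if and only if the terminal vertices
of `e₁` and `e₂` are distinct, i.e. the fold is of type 1.  Moreover a type-2
fold (equal terminal vertices) fails to be injective on fundamental groups.
-/
theorem fold_is_homotopy_equivalence_iff_type1
    {G H : SerreGraph} (hconn : G.Conn) (f : GraphHom G H)
    (e₁ e₂ : G.E) (hfold : IsFoldAt f e₁ e₂) (v₀ : G.V) :
    (InducesPi1Bij f v₀ ↔ G.tgt e₁ ≠ G.tgt e₂) ∧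
    (G.tgt e₁ = G.tgt e₂ →
      ¬ ∀ p p' : EWalk G v₀ v₀,
          Htp H (f.mapWalk p) (f.mapWalk p') → Htp G p p') := by
  have type2 : G.tgt e₁ = G.tgt e₂ →
      ¬ ∀ p p' : EWalk G v₀ v₀,
        Htp H (f.mapWalk p) (f.mapWalk p') → Htp G p p' := by
    intro h2 hinj
    obtain ⟨w⟩ := hconn v₀ (G.src e₁)
    have pf : G.tgt (G.bar e₂) = G.src e₁ := by
      show G.src (G.bar (G.bar e₂)) = G.src e₁
      rw [G.bar_bar]; exact hfold.2.2.1.symm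
    have hsb : G.src (G.bar e₂) = G.tgt e₂ := rfl
    have hmap : f.mapWalk (w.append (.cons e₁ rfl h2 (.cons (G.bar e₂) hsb pf w.reverse)))
        = f.mapWalk (w.append (.cons e₂ hfold.2.2.1.symm rfl
            (.cons (G.bar e₂) hsb pf w.reverse))) := by
      rw [f.map_append, f.map_append, GraphHom.mapWalk_cons, GraphHom.mapWalk_cons]
      congr 1
      exact EWalk.cons_congr hfold.2.2.2.2.2.1 _ _ _ _ _
    have h6 := iw_htp (hinj
      (w.append (.cons e₁ rfl h2 (.cons (G.bar e₂) hsb pf w.reverse)))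
      (w.append (.cons e₂ hfold.2.2.1.symm rfl (.cons (G.bar e₂) hsb pf w.reverse)))
      (Htp.of_eq hmap))
    simp only [iw_append, iw_cons] at h6
    have h7 := mul_right_cancel (mul_left_cancel h6)
    exact hfold.1 (valE_inj h7)
  refine ⟨⟨fun hbij h2 => type2 h2 hbij.2, fun ht12 => ⟨?_, ?_⟩⟩, type2⟩
  · intro q
    refine ⟨(Fold.conn hfold v₀).reverse.append
      ((Fold.liftW hfold q).append (Fold.conn hfold v₀)), ?_⟩
    rw [f.map_append, f.map_append, f.map_reverse]
    refine Htp.trans (Htp.append_right (Htp.reverse (Fold.f_conn hfold v₀)) _) ?_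
    refine Htp.trans (Htp.append_left _ (Htp.append_right (Fold.f_lift hfold q) _)) ?_
    refine Htp.trans (Htp.append_left _ (Htp.append_left _ (Fold.f_conn hfold v₀))) ?_
    rw [EWalk.reverse_nil']
    simp only [EWalk.append_assoc]
    rw [EWalk.nil'_append_nil'_assoc]
    rw [EWalk.nil'_append_nil']
    rw [EWalk.nil'_id_append]
    rw [EWalk.nil'_id, EWalk.append_nil]
    exact Htp.refl q
  · intro p p' hpq
    have h3 := ((Fold.lift_map hfold ht12 p).symm.trans
      (Htp.append_right (Fold.lift_htp hfold hpq) (Fold.conn hfold v₀))).trans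
      (Fold.lift_map hfold ht12 p')
    exact Htp.cancel_left (Fold.conn hfold v₀) h3
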